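/- Let 𝒜 be any central arrangement in ℂ², given by r ≥ 1 pairwise non-proportional nonzero linear forms in S = ℂ[x₁,x₂], and let m ≥ 1. Then D^(m)(𝒜) is a free S-module of rank m+1. -/

import Mathlib

open MvPolynomial

noncomputable section

/-- The polynomial ring `S = ℂ[x₁,…,xₙ]`. -/
abbrev S (n : ℕ) : Type := MvPolynomial (Fin n) ℂ

/-- The finite set of exponent vectors `α ∈ ℕⁿ` with `|α| = m`. -/
def degIdx (n m : ℕ) : Finset (Fin n → ℕ) :=
  (Fintype.piFinset fun _ : Fin n => Finset.range (m + 1)).filter fun α => ∑ i, α i = m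

/-- The differential operator `∂^α`, the composition of the partial derivatives
`∂/∂xᵢ` applied `αᵢ` times. -/
def pd {n : ℕ} (α : Fin n → ℕ) : Module.End ℂ (S n) :=
  (List.ofFn fun i : Fin n => ((pderiv (R := ℂ) i).toLinearMap) ^ (α i)).prod

/-- The action of an order-`m` differential operator with polynomial coefficients
`c = (c_α)_{|α| = m}` on a polynomial: `c(f) = Σ_{|α|=m} c_α ∂^α f`. -/
def applyOp {n m : ℕ} (c : degIdx n m → S n) (f : S n) : S n :=
  ∑ α : degIdx n m, c α * pd (α : Fin n → ℕ) f

lemma applyOp_add {n m : ℕ} (a b : degIdx n m → S n) (f : S n) :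
    applyOp (a + b) f = applyOp a f + applyOp b f := by
  simp [applyOp, add_mul, Finset.sum_add_distrib]

lemma applyOp_smul {n m : ℕ} (s : S n) (a : degIdx n m → S n) (f : S n) :
    applyOp (s • a) f = s * applyOp a f := by
  simp [applyOp, Finset.mul_sum, mul_assoc]

lemma applyOp_zero {n m : ℕ} (f : S n) : applyOp (0 : degIdx n m → S n) f = 0 := by
  simp [applyOp]

/-- `D^(m)(p)`: the `S`-module of order-`m` differential operators with polynomial
coefficients preserving the principal ideal `⟨p⟩`. -/
def Dm {n : ℕ} (m : ℕ) (p : S n) : Submodule (S n) (degIdx n m → S n) where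
  carrier := {c | ∀ f ∈ Ideal.span {p}, applyOp c f ∈ Ideal.span {p}}
  add_mem' := by
    intro a b ha hb f hf
    rw [applyOp_add]
    exact Ideal.add_mem _ (ha f hf) (hb f hf)
  zero_mem' := by
    intro f hf
    rw [applyOp_zero]
    exact Ideal.zero_mem _
  smul_mem' := by
    intro s c hc f hf
    rw [applyOp_smul]
    exact Ideal.mul_mem_left _ _ (hc f hf)

/-- A nonzero linear form. -/
def IsLinearForm {n : ℕ} (q : S n) : Prop := q ≠ 0 ∧ q.IsHomogeneous 1

/-- The linear forms of an arrangement are pairwise non-proportional. -/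
def PairwiseNonProportional {n r : ℕ} (p : Fin r → S n) : Prop :=
  ∀ i j : Fin r, i ≠ j → ∀ a : ℂ, p i ≠ a • p j

end


noncomputable section AuxProof

open MvPolynomial

/-- evaluation x ↦ 0, y ↦ t -/
def ev0 : S 2 →ₐ[ℂ] Polynomial ℂ := aeval ![0, Polynomial.X]

lemma X0_dvd_of_ev0_eq_zero {g : S 2} (hg : ev0 g = 0) : (X 0 : S 2) ∣ g := by
  set e := finSuccEquiv ℂ 1 with he
  set θ : MvPolynomial (Fin 1) ℂ →ₐ[ℂ] Polynomial ℂ := aeval ![Polynomial.X] with hθ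
  have key : θ ((e g).coeff 0) = ev0 g := by
    have h : (θ.toRingHom.comp ((Polynomial.constantCoeff).comp
        (e : S 2 →+* Polynomial (MvPolynomial (Fin 1) ℂ)))) = (ev0 : S 2 →+* Polynomial ℂ) := by
      apply MvPolynomial.ringHom_ext
      · intro a
        have : e (C a) = Polynomial.C (C a) := by
          simp [he, finSuccEquiv_apply]
        simp [this, ev0, hθ]
      · intro i
        refine Fin.cases ?_ ?_ i
        · have : e (X 0) = Polynomial.X := finSuccEquiv_X_zero
          simp [this, ev0, hθ]
        · intro j
          have : e (X j.succ) = Polynomial.C (X j) := finSuccEquiv_X_succ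
          have hj : j = 0 := Subsingleton.elim _ _
          subst hj
          rw [show (X (Fin.succ 0) : S 2) = X 1 from rfl] at this
          simp [this, ev0, hθ]
    exact congrArg (fun F : S 2 →+* Polynomial ℂ => F g) h
  have hLI : Function.LeftInverse (Polynomial.aeval (X (0 : Fin 1))) θ := by
    intro z
    have h : ((Polynomial.aeval (X (0 : Fin 1))).comp θ : MvPolynomial (Fin 1) ℂ →ₐ[ℂ] _)
        = AlgHom.id ℂ _ := by
      apply MvPolynomial.algHom_ext
      intro i
      have hi : i = 0 := Subsingleton.elim _ _
      subst hi
      simp [hθ]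
    exact congrArg (fun F : MvPolynomial (Fin 1) ℂ →ₐ[ℂ] MvPolynomial (Fin 1) ℂ => F z) h
  have h0 : (e g).coeff 0 = 0 := by
    have h1 := key.trans hg
    have h2 := congrArg (fun z => (Polynomial.aeval (X (0 : Fin 1)) : Polynomial ℂ →ₐ[ℂ] MvPolynomial (Fin 1) ℂ) z) h1
    rw [hLI ((e g).coeff 0)] at h2
    simpa using h2
  obtain ⟨h, hh⟩ := Polynomial.X_dvd_iff.mpr h0
  refine ⟨e.symm h, ?_⟩
  have : g = e.symm (Polynomial.X * h) := by
    rw [← hh]; exact (e.symm_apply_apply g).symm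
  rw [this, map_mul]
  congr 1
  rw [← finSuccEquiv_X_zero (R := ℂ) (n := 1), ← he, e.symm_apply_apply]

namespace LineStuff

variable (α β : ℂ)

local notation "σc" => (starRingEnd ℂ)

def lin : S 2 := C α * X 0 + C β * X 1

def πl : S 2 →ₐ[ℂ] Polynomial ℂ :=
  aeval ![Polynomial.C β * Polynomial.X, -(Polynomial.C α) * Polynomial.X]

def dd : ℂ := α * σc α + β * σc β

lemma dd_ne_zero (hαβ : ¬ (α = 0 ∧ β = 0)) : dd α β ≠ 0 := by
  have h : dd α β = ((Complex.normSq α + Complex.normSq β : ℝ) : ℂ) := by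
    rw [dd, Complex.mul_conj, Complex.mul_conj]; push_cast; ring
  rw [h, Ne, Complex.ofReal_eq_zero]
  intro h2
  have h1 : Complex.normSq α = 0 ∧ Complex.normSq β = 0 := by
    constructor <;> nlinarith [Complex.normSq_nonneg α, Complex.normSq_nonneg β]
  exact hαβ ⟨Complex.normSq_eq_zero.mp h1.1, Complex.normSq_eq_zero.mp h1.2⟩

def Φf : S 2 →ₐ[ℂ] S 2 := aeval ![C (-(σc α)) * X 0 + C β * X 1, C (-(σc β)) * X 0 + C (-α) * X 1]

def Φi : S 2 →ₐ[ℂ] S 2 :=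
  aeval ![C (-α / dd α β) * X 0 + C (-β / dd α β) * X 1,
         C (σc β / dd α β) * X 0 + C (-(σc α) / dd α β) * X 1]

lemma Φi_Φf (hαβ : ¬ (α = 0 ∧ β = 0)) (g : S 2) : Φi α β (Φf α β g) = g := by
  have hd := dd_ne_zero α β hαβ
  have hC' : ((C α * C (σc α) + C β * C (σc β)) : S 2) * C ((dd α β)⁻¹) = 1 := by
    rw [← map_mul, ← map_mul, ← map_add, ← map_mul, ← dd, mul_inv_cancel₀ hd, map_one]
  have h : ((Φi α β).comp (Φf α β)) = AlgHom.id ℂ (S 2) := by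
    apply MvPolynomial.algHom_ext
    intro i
    fin_cases i <;>
    · simp [Φf, Φi, div_eq_mul_inv]
      first
      | linear_combination (X (0 : Fin 2) : S 2) * hC'
      | linear_combination (X (1 : Fin 2) : S 2) * hC'
  exact congrArg (fun F : S 2 →ₐ[ℂ] S 2 => F g) h

lemma ev0_Φf (g : S 2) : ev0 (Φf α β g) = πl α β g := by
  have h : (ev0.comp (Φf α β)) = πl α β := by
    apply MvPolynomial.algHom_ext
    intro i
    fin_cases i <;> simp [Φf, πl, ev0]
  exact congrArg (fun F : S 2 →ₐ[ℂ] Polynomial ℂ => F g) h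

lemma Φi_X0 : Φi α β (X 0) = C (-(dd α β)⁻¹) * lin α β := by
  simp [Φi, lin, div_eq_mul_inv]
  ring

lemma lin_dvd_of_πl_eq_zero (hαβ : ¬ (α = 0 ∧ β = 0)) {g : S 2} (hg : πl α β g = 0) :
    lin α β ∣ g := by
  have h1 : ev0 (Φf α β g) = 0 := by rw [ev0_Φf, hg]
  obtain ⟨h, hh⟩ := X0_dvd_of_ev0_eq_zero h1
  refine ⟨C (-(dd α β)⁻¹) * Φi α β h, ?_⟩
  have h2 := congrArg (Φi α β) hh
  rw [Φi_Φf α β hαβ, map_mul, Φi_X0] at h2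
  rw [h2]; ring

lemma πl_lin : πl α β (lin α β) = 0 := by
  simp [πl, lin]
  ring

/-- section of πl -/
def σl : Polynomial ℂ →ₐ[ℂ] S 2 :=
  Polynomial.aeval (C (σc β / dd α β) * X 0 + C (-(σc α) / dd α β) * X 1)

lemma πl_σl (hαβ : ¬ (α = 0 ∧ β = 0)) (q : Polynomial ℂ) : πl α β (σl α β q) = q := by
  have hd := dd_ne_zero α β hαβ
  have h : ((πl α β).comp (σl α β)) = AlgHom.id ℂ (Polynomial ℂ) := by
    apply Polynomial.algHom_ext
    simp [σl, πl, div_eq_mul_inv]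
    have h2 : (σc β * β + σc α * α) = dd α β := by rw [dd]; ring
    have hC'' : (Polynomial.C (σc β) * Polynomial.C β + Polynomial.C (σc α) * Polynomial.C α)
        * Polynomial.C ((dd α β)⁻¹) = (1 : Polynomial ℂ) := by
      rw [← map_mul, ← map_mul, ← map_add, ← map_mul, h2, mul_inv_cancel₀ hd, map_one]
    linear_combination (Polynomial.X : Polynomial ℂ) * hC''
  exact congrArg (fun F : Polynomial ℂ →ₐ[ℂ] Polynomial ℂ => F q) h

lemma lin_coeff0 : coeff (Finsupp.single 0 1) (lin α β) = α := by
  rw [lin, coeff_add, coeff_C_mul, coeff_C_mul, coeff_X', coeff_X']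
  rw [if_pos rfl, if_neg (by
    intro hc
    have := congrFun (congrArg (fun f : Fin 2 →₀ ℕ => (f : Fin 2 → ℕ)) hc) 0
    simp [Finsupp.single_apply] at this)]
  ring

lemma lin_coeff1 : coeff (Finsupp.single 1 1) (lin α β) = β := by
  rw [lin, coeff_add, coeff_C_mul, coeff_C_mul, coeff_X', coeff_X']
  rw [if_neg (by
    intro hc
    have := congrFun (congrArg (fun f : Fin 2 →₀ ℕ => (f : Fin 2 → ℕ)) hc) 0
    simp [Finsupp.single_apply] at this), if_pos rfl]
  ring

lemma lin_ne_zero (hαβ : ¬ (α = 0 ∧ β = 0)) : lin α β ≠ 0 := by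
  intro h0
  apply hαβ
  constructor
  · rw [← lin_coeff0 α β, h0, coeff_zero]
  · rw [← lin_coeff1 α β, h0, coeff_zero]

lemma lin_smul (a : ℂ) : lin (a * α) (a * β) = C a * lin α β := by
  rw [lin, lin, map_mul, map_mul]
  ring

lemma degree_eq (d : Fin 2 →₀ ℕ) : d.degree = d 0 + d 1 := by
  rw [show d.degree = ∑ i ∈ d.support, d i from rfl]
  rw [Finset.sum_subset (Finset.subset_univ d.support)]
  · simp [Fin.sum_univ_two]
  · intro x _ hx
    simpa using (Finsupp.notMem_support_iff.mp hx)

lemma eq_lin_of_linear_form {q : S 2} (h : q.IsHomogeneous 1) :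
    q = lin (coeff (Finsupp.single 0 1) q) (coeff (Finsupp.single 1 1) q) := by
  apply MvPolynomial.ext
  intro d
  rw [lin, coeff_add, coeff_C_mul, coeff_C_mul, coeff_X', coeff_X']
  by_cases h0 : d = Finsupp.single 0 1
  · subst h0
    rw [if_pos rfl, if_neg (by
      intro hc
      have := congrFun (congrArg (fun f : Fin 2 →₀ ℕ => (f : Fin 2 → ℕ)) hc) 0
      simp [Finsupp.single_apply] at this)]
    ring
  · by_cases h1 : d = Finsupp.single 1 1
    · subst h1
      rw [if_neg (by
        intro hc
        have := congrFun (congrArg (fun f : Fin 2 →₀ ℕ => (f : Fin 2 → ℕ)) hc) 0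
        simp [Finsupp.single_apply] at this), if_pos rfl]
      ring
    · rw [if_neg (fun hc => h0 hc.symm), if_neg (fun hc => h1 hc.symm)]
      simp only [mul_zero, add_zero]
      apply h.coeff_eq_zero
      rw [degree_eq]
      intro hc
      rcases Nat.eq_zero_or_pos (d 0) with h00 | h01
      · have hd1 : d 1 = 1 := by omega
        apply h1
        ext i
        fin_cases i <;> simp [Finsupp.single_apply, h00, hd1]
      · have hd0 : d 0 = 1 := by omega
        have hd1 : d 1 = 0 := by omega
        apply h0
        ext i
        fin_cases i <;> simp [Finsupp.single_apply, hd0, hd1]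

lemma πl_lin' (α' β' : ℂ) :
    πl α β (lin α' β') = Polynomial.C (α' * β - β' * α) * Polynomial.X := by
  simp [πl, lin]
  ring

lemma πl_lin'_ne_zero {α' β' : ℂ} (h : α' * β - β' * α ≠ 0) :
    πl α β (lin α' β') ≠ 0 := by
  rw [πl_lin']
  intro hc
  rcases mul_eq_zero.mp hc with h1 | h2
  · exact h (by simpa using (Polynomial.C_eq_zero.mp h1))
  · exact Polynomial.X_ne_zero h2

lemma prod_dvd_iff {r : ℕ} (A B : Fin r → ℂ)
    (hne : ∀ j, ¬(A j = 0 ∧ B j = 0))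
    (hcross : ∀ i j, i ≠ j → A i * B j - B i * A j ≠ 0)
    (f : S 2) : (∏ j, lin (A j) (B j)) ∣ f ↔ ∀ j, πl (A j) (B j) f = 0 := by
  constructor
  · rintro ⟨g, rfl⟩ j
    rw [map_mul]
    have h0 : πl (A j) (B j) (∏ i, lin (A i) (B i)) = 0 := by
      rw [map_prod]
      apply Finset.prod_eq_zero (Finset.mem_univ j)
      exact πl_lin _ _
    rw [h0, zero_mul]
  · intro hv
    have key : ∀ T : Finset (Fin r), (∏ j ∈ T, lin (A j) (B j)) ∣ f := by
      intro T
      induction T using Finset.induction_on with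
      | empty => simpa using dvd_refl f
      | @insert j' T hj' ih =>
        obtain ⟨g, hg⟩ := ih
        have h1 : πl (A j') (B j') ((∏ i ∈ T, lin (A i) (B i))) * πl (A j') (B j') g = 0 := by
          rw [← map_mul, ← hg]; exact hv j'
        have h2 : πl (A j') (B j') ((∏ i ∈ T, lin (A i) (B i))) ≠ 0 := by
          rw [map_prod]
          apply Finset.prod_ne_zero_iff.mpr
          intro i hi
          exact πl_lin'_ne_zero _ _ (hcross i j' (fun hc => hj' (hc ▸ hi)))
        have h3 : πl (A j') (B j') g = 0 := by
          rcases mul_eq_zero.mp h1 with h | h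
          · exact absurd h h2
          · exact h
        obtain ⟨g', hg'⟩ := lin_dvd_of_πl_eq_zero (A j') (B j') (hne j') h3
        exact ⟨g', by rw [Finset.prod_insert hj', hg, hg']; ring⟩
    simpa using key Finset.univ

variable {ι : Type} [Fintype ι] [DecidableEq ι]

set_option maxHeartbeats 1000000 in
set_option synthInstance.maxHeartbeats 1000000 in
lemma step {n : ℕ} (α β : ℂ) (hαβ : ¬(α = 0 ∧ β = 0))
    (N : Submodule (S 2) (ι → S 2)) (bN : Module.Basis (Fin n) (S 2) N)
    {G : Type} (φ : G → (ι → S 2) → Polynomial ℂ)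
    (hsmul : ∀ g (s : S 2) a, φ g (s • a) = πl α β s * φ g a)
    (hadd : ∀ g a b, φ g (a + b) = φ g a + φ g b)
    (D' : Submodule (S 2) (ι → S 2))
    (hD' : ∀ v, v ∈ D' ↔ ∀ g, φ g v = 0) :
    Nonempty (Module.Basis (Fin n) (S 2) ↥(N ⊓ D')) := by
  classical
  have hφ0 : ∀ g, φ g 0 = 0 := by
    intro g
    have := hsmul g 0 0
    simpa using this
  -- sums
  have hφsum : ∀ g (u : Fin n → S 2) (v : Fin n → (ι → S 2)),
      φ g (∑ i, u i • v i) = ∑ i, πl α β (u i) * φ g (v i) := by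
    intro g u v
    have : ∀ T : Finset (Fin n), φ g (∑ i ∈ T, u i • v i) = ∑ i ∈ T, πl α β (u i) * φ g (v i) := by
      intro T
      induction T using Finset.induction_on with
      | empty => simpa using hφ0 g
      | @insert j T hj ih =>
        rw [Finset.sum_insert hj, Finset.sum_insert hj, hadd, hsmul, ih]
    exact this Finset.univ
  -- the submodule V over R'
  set V : Submodule (Polynomial ℂ) (Fin n → Polynomial ℂ) :=
    { carrier := {w | ∀ g, ∑ i, w i * φ g ↑(bN i) = 0}
      add_mem' := by
        intro a b ha hb g
        have h2 : ∑ i, (a + b) i * φ g ↑(bN i)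
            = (∑ i, a i * φ g ↑(bN i)) + ∑ i, b i * φ g ↑(bN i) := by
          rw [← Finset.sum_add_distrib]
          apply Finset.sum_congr rfl
          intro i _
          simp [add_mul]
        rw [h2, ha g, hb g, add_zero]
      zero_mem' := by intro g; simp
      smul_mem' := by
        intro c w hw g
        have h2 : ∑ i, (c • w) i * φ g ↑(bN i) = c * ∑ i, w i * φ g ↑(bN i) := by
          rw [Finset.mul_sum]
          apply Finset.sum_congr rfl
          intro i _
          simp [mul_assoc]
        rw [h2, hw g, mul_zero] } with hV
  have memV : ∀ w, w ∈ V ↔ ∀ g, ∑ i, w i * φ g ↑(bN i) = 0 := fun w => Iff.rfl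
  -- transfer
  have transfer : ∀ z : ↥N, (↑z ∈ D') ↔ (fun i => πl α β (bN.equivFun z i)) ∈ V := by
    intro z
    have hz : (z : ι → S 2) = ∑ i, bN.equivFun z i • (↑(bN i) : ι → S 2) := by
      conv_lhs => rw [← bN.sum_equivFun z]
      push_cast
      rfl
    rw [hD' (↑z)]
    constructor
    · intro h g
      have := h g
      rwa [hz, hφsum] at this
    · intro h g
      rw [hz, hφsum]
      exact h g
  -- quotient module
  haveI hNZ : NoZeroSMulDivisors (Polynomial ℂ) ((Fin n → Polynomial ℂ) ⧸ V) := by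
    constructor
    intro c q hcq
    by_cases hc : c = 0
    · exact Or.inl hc
    · right
      obtain ⟨w, rfl⟩ := V.mkQ_surjective q
      rw [← map_smul] at hcq
      have hw : c • w ∈ V := by
        rwa [← Submodule.Quotient.mk_eq_zero V]
      have hwV : w ∈ V := by
        rw [memV]
        intro g
        have h1 := (memV _).mp hw g
        have h2 : ∑ i, (c • w) i * φ g ↑(bN i) = c * ∑ i, w i * φ g ↑(bN i) := by
          rw [Finset.mul_sum]
          apply Finset.sum_congr rfl
          intro i _
          simp [mul_assoc]
        rw [h2] at h1
        rcases mul_eq_zero.mp h1 with h | h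
        · exact absurd h hc
        · exact h
      rw [show V.mkQ w = Submodule.Quotient.mk w from rfl, Submodule.Quotient.mk_eq_zero V]
      exact hwV
  haveI hfree : Module.Free (Polynomial ℂ) ((Fin n → Polynomial ℂ) ⧸ V) :=
    Module.free_of_finite_type_torsion_free'
  obtain ⟨sp, hsp⟩ := Module.projective_lifting_property V.mkQ
    (LinearMap.id : ((Fin n → Polynomial ℂ) ⧸ V) →ₗ[Polynomial ℂ] _) (V.mkQ_surjective)
  have hsp' : ∀ q, V.mkQ (sp q) = q := fun q => congrArg (fun F => F q)
    (congrArg (fun (F : _ →ₗ[Polynomial ℂ] _) => F.toFun) hsp)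
  -- the splitting equivalence
  have hVmem : ∀ w : Fin n → Polynomial ℂ, w - sp (V.mkQ w) ∈ V := by
    intro w
    rw [← Submodule.Quotient.mk_eq_zero V]
    rw [show (Submodule.Quotient.mk (w - sp (V.mkQ w)) : _ ⧸ V) = V.mkQ (w - sp (V.mkQ w)) from rfl]
    rw [map_sub, hsp', sub_self]
  set fwd : (Fin n → Polynomial ℂ) →ₗ[Polynomial ℂ]
      (V × ((Fin n → Polynomial ℂ) ⧸ V)) :=
    LinearMap.prod ((LinearMap.id - sp ∘ₗ V.mkQ).codRestrict V hVmem) V.mkQ with hfwd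
  set bwd : (V × ((Fin n → Polynomial ℂ) ⧸ V)) →ₗ[Polynomial ℂ] (Fin n → Polynomial ℂ) :=
    V.subtype ∘ₗ LinearMap.fst _ _ _ + sp ∘ₗ LinearMap.snd _ _ _ with hbwd
  have hfb : ∀ x, fwd (bwd x) = x := by
    rintro ⟨v, q⟩
    simp only [hfwd, hbwd, LinearMap.prod_apply, LinearMap.add_apply, LinearMap.comp_apply,
      LinearMap.fst_apply, LinearMap.snd_apply, Submodule.subtype_apply, Function.prod,
      LinearMap.codRestrict_apply, LinearMap.sub_apply, LinearMap.id_apply, map_add]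
    have h1 : V.mkQ ↑v = 0 := (Submodule.Quotient.mk_eq_zero V).mpr v.2
    rw [Prod.mk_add_mk]
    refine Prod.ext ?_ ?_
    · apply Subtype.ext
      rw [Submodule.coe_add]
      simp only [LinearMap.codRestrict_apply, LinearMap.sub_apply, LinearMap.id_apply,
        LinearMap.comp_apply, h1, hsp', map_zero]
      abel
    · simp only [h1, hsp', zero_add]
  have hbf : ∀ w, bwd (fwd w) = w := by
    intro w
    simp only [hfwd, hbwd, LinearMap.prod_apply, LinearMap.add_apply, LinearMap.comp_apply,
      LinearMap.fst_apply, LinearMap.snd_apply, Submodule.subtype_apply, Function.prod,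
      LinearMap.codRestrict_apply, LinearMap.sub_apply, LinearMap.id_apply]
    abel
  set eVQ : (Fin n → Polynomial ℂ) ≃ₗ[Polynomial ℂ] (V × ((Fin n → Polynomial ℂ) ⧸ V)) :=
    LinearEquiv.ofLinear fwd bwd (LinearMap.ext hfb) (LinearMap.ext hbf) with heVQ
  -- bases
  obtain ⟨k, bV⟩ := Submodule.basisOfPid (Pi.basisFun (Polynomial ℂ) (Fin n)) V
  set κ := Module.Free.ChooseBasisIndex (Polynomial ℂ) ((Fin n → Polynomial ℂ) ⧸ V) with hκ
  set bQ0 := Module.Free.chooseBasis (Polynomial ℂ) ((Fin n → Polynomial ℂ) ⧸ V) with hbQ0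
  set bQ := bQ0 with hbQdef
  set bF' := (bV.prod bQ).map eVQ.symm with hbF'
  have hbF'inl : ∀ a, bF' (Sum.inl a) = ↑(bV a) := by
    intro a
    rw [hbF', Module.Basis.map_apply]
    have : (bV.prod bQ) (Sum.inl a) = (bV a, 0) := by
      apply Prod.ext
      · exact Module.Basis.prod_apply_inl_fst _ _ _
      · exact Module.Basis.prod_apply_inl_snd _ _ _
    rw [this]
    show bwd (bV a, 0) = ↑(bV a)
    simp [hbwd]
  have hbF'inr : ∀ b, bF' (Sum.inr b) = sp (bQ b) := by
    intro b
    rw [hbF', Module.Basis.map_apply]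
    have : (bV.prod bQ) (Sum.inr b) = (0, bQ b) := by
      apply Prod.ext
      · exact Module.Basis.prod_apply_inr_fst _ _ _
      · exact Module.Basis.prod_apply_inr_snd _ _ _
    rw [this]
    show bwd (0, bQ b) = sp (bQ b)
    simp [hbwd]
  -- reindex to Fin n
  set eqv : (Fin k ⊕ κ) ≃ Fin n := bF'.indexEquiv (Pi.basisFun (Polynomial ℂ) (Fin n)) with heqv
  set bF := bF'.reindex eqv with hbF
  have hbFval : ∀ i, bF i = bF' (eqv.symm i) := by
    intro i
    rw [hbF, Module.Basis.reindex_apply]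
  -- repr vanishing on V
  have reprVanish : ∀ w ∈ V, ∀ b, bF'.repr w (Sum.inr b) = 0 := by
    intro w hw b
    have hexp : w = ∑ x, bF'.repr w x • bF' x := (bF'.sum_repr w).symm
    have h0 : V.mkQ w = 0 := (Submodule.Quotient.mk_eq_zero V).mpr hw
    have h1 : ∑ x, bF'.repr w x • V.mkQ (bF' x) = 0 := by
      have h2 : V.mkQ (∑ x, bF'.repr w x • bF' x) = ∑ x, bF'.repr w x • V.mkQ (bF' x) := by
        rw [map_sum]
        apply Finset.sum_congr rfl
        intro x _
        rw [map_smul]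
      rw [← h2, ← hexp, h0]
    have h3 : ∑ b', bF'.repr w (Sum.inr b') • bQ b' = 0 := by
      have h4 := h1
      rw [Fintype.sum_sum_type] at h4
      have h5 : ∀ a, bF'.repr w (Sum.inl a) • V.mkQ (bF' (Sum.inl a)) = 0 := by
        intro a
        rw [hbF'inl]
        rw [show V.mkQ ↑(bV a) = Submodule.Quotient.mk ↑(bV a) from rfl]
        rw [(Submodule.Quotient.mk_eq_zero V).mpr (bV a).2, smul_zero]
      rw [Finset.sum_congr rfl (fun a _ => h5 a), Finset.sum_const_zero, zero_add] at h4
      calc ∑ b', bF'.repr w (Sum.inr b') • bQ b'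
          = ∑ b', bF'.repr w (Sum.inr b') • V.mkQ (bF' (Sum.inr b')) := by
            apply Finset.sum_congr rfl
            intro b' _
            rw [hbF'inr, hsp']
        _ = 0 := h4
    exact Fintype.linearIndependent_iff.mp bQ.linearIndependent _ h3 b
  -- matrices
  set stdB := Pi.basisFun (Polynomial ℂ) (Fin n) with hstd
  set U := stdB.toMatrix bF with hU
  set W := bF.toMatrix stdB with hW
  have hUW : U * W = 1 := Module.Basis.toMatrix_mul_toMatrix_flip stdB bF
  have hWU : W * U = 1 := Module.Basis.toMatrix_mul_toMatrix_flip bF stdB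
  have hUentry : ∀ r i, U r i = (bF i : Fin n → Polynomial ℂ) r := by
    intro r i
    rw [hU, Module.Basis.toMatrix_apply, hstd, Pi.basisFun_repr]
  have hreprW : ∀ (v : Fin n → Polynomial ℂ) i, (bF.repr v i : Polynomial ℂ) = W.mulVec v i := by
    intro v i
    have hv : v = ∑ j, v j • stdB j := by
      rw [hstd]
      ext r
      simp [Pi.basisFun_apply, Finset.sum_apply, Pi.single_apply]
    calc (bF.repr v i : Polynomial ℂ) = bF.repr (∑ j, v j • stdB j) i := by rw [← hv]
      _ = ∑ j, v j * bF.repr (stdB j) i := by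
          rw [map_sum, Finsupp.finset_sum_apply]
          apply Finset.sum_congr rfl
          intro j _
          rw [map_smul]
          simp
      _ = W.mulVec v i := by
          rw [Matrix.mulVec, dotProduct]
          apply Finset.sum_congr rfl
          intro j _
          rw [hW, Module.Basis.toMatrix_apply]
          ring
  have hUrepr : ∀ v : Fin n → Polynomial ℂ, U.mulVec (fun i => bF.repr v i) = v := by
    intro v
    have h : (fun i => (bF.repr v i : Polynomial ℂ)) = W.mulVec v := funext (hreprW v)
    rw [h, Matrix.mulVec_mulVec, hUW, Matrix.one_mulVec]
  -- lifted matrices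
  set Ut := U.map (σl α β) with hUt
  set Wt := W.map (σl α β) with hWt
  have hmapmul : ∀ (M1 M2 : Matrix (Fin n) (Fin n) (Polynomial ℂ)),
      (M1 * M2).map (σl α β) = M1.map (σl α β) * M2.map (σl α β) := by
    intro M1 M2
    ext r c
    simp [Matrix.map_apply, Matrix.mul_apply, map_sum, map_mul]
  have hmapone : (1 : Matrix (Fin n) (Fin n) (Polynomial ℂ)).map (σl α β)
      = (1 : Matrix (Fin n) (Fin n) (S 2)) := by
    ext r c
    by_cases h : r = c
    · subst h; simp [Matrix.map_apply]
    · simp [Matrix.map_apply, Matrix.one_apply_ne h]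
  have hUtWt : Ut * Wt = 1 := by rw [hUt, hWt, ← hmapmul, hUW, hmapone]
  have hWtUt : Wt * Ut = 1 := by rw [hUt, hWt, ← hmapmul, hWU, hmapone]
  have hπσe : ∀ q : Polynomial ℂ, πl α β (σl α β q) = q := πl_σl α β hαβ
  have hπmulVec : ∀ (Ms : Matrix (Fin n) (Fin n) (S 2)) (u : Fin n → S 2) r,
      πl α β ((Ms.mulVec u) r) = Matrix.mulVec (Ms.map (πl α β)) (fun i => πl α β (u i)) r := by
    intro Ms u r
    simp [Matrix.mulVec, dotProduct, map_sum, map_mul, Matrix.map_apply]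
  have hUtπ : Ut.map (πl α β) = U := by
    ext r c
    simp [hUt, Matrix.map_apply, hπσe]
  have hWtπ : Wt.map (πl α β) = W := by
    ext r c
    simp [hWt, Matrix.map_apply, hπσe]
  -- final basis construction
  set lp := lin α β with hlp
  have hπl0 : πl α β lp = 0 := πl_lin α β
  have hlne : lp ≠ 0 := lin_ne_zero α β hαβ
  set cho : Fin n → S 2 := fun i => Sum.elim (fun _ => (1 : S 2)) (fun _ => lp) (eqv.symm i)
    with hcho
  set mvec : Fin n → (Fin n → S 2) := fun i => fun r => Ut r i * cho i with hmvec
  have hUtentry : ∀ r c, πl α β (Ut r c) = U r c := by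
    intro r c
    simp [hUt, Matrix.map_apply, hπσe]
  have hmvecV : ∀ i, (fun r => πl α β (mvec i r)) ∈ V := by
    intro i
    have hval : ∀ r, πl α β (mvec i r) = U r i * πl α β (cho i) := by
      intro r
      rw [hmvec]
      simp only [map_mul, hUtentry]
    rcases hsi : eqv.symm i with a | b
    · have hcho1 : cho i = 1 := by simp only [hcho]; rw [hsi]; rfl
      have : (fun r => πl α β (mvec i r)) = ((bV a : Fin n → Polynomial ℂ)) := by
        ext r
        rw [hval, hcho1, map_one, mul_one, hUentry, hbFval, hsi, hbF'inl]
      rw [this]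
      exact (bV a).2
    · have hcho1 : cho i = lp := by simp only [hcho]; rw [hsi]; rfl
      have : (fun r => πl α β (mvec i r)) = (0 : Fin n → Polynomial ℂ) := by
        ext r
        rw [hval, hcho1, hπl0, mul_zero]
        rfl
      rw [this]
      exact V.zero_mem
  set melt : Fin n → ↥N := fun i => bN.equivFun.symm (mvec i) with hmelt
  have hmeltcoord : ∀ i, bN.equivFun (melt i) = mvec i := by
    intro i
    rw [hmelt]
    exact bN.equivFun.apply_symm_apply (mvec i)
  have hmeltD : ∀ i, (↑(melt i) : ι → S 2) ∈ D' := by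
    intro i
    refine (transfer (melt i)).mpr ?_
    have : (fun j => πl α β (bN.equivFun (melt i) j)) = (fun r => πl α β (mvec i r)) := by
      rw [hmeltcoord]
    rw [this]
    exact hmvecV i
  set BB : Fin n → ↥(N ⊓ D') := fun i => ⟨↑(melt i), ⟨(melt i).2, hmeltD i⟩⟩ with hBB
  -- spanning
  have hspan : ∀ z : ↥(N ⊓ D'), ∃ c : Fin n → S 2, z = ∑ i, c i • BB i := by
    intro z
    set zN : ↥N := ⟨z.1, z.2.1⟩ with hzN
    set u := bN.equivFun zN with hu
    have huV : (fun i => πl α β (u i)) ∈ V := (transfer zN).mp z.2.2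
    set w := Wt.mulVec u with hwdef
    have hu_eq : u = Ut.mulVec w := by
      rw [hwdef, Matrix.mulVec_mulVec, hUtWt, Matrix.one_mulVec]
    have hπw : ∀ i, πl α β (w i) = bF.repr (fun j => πl α β (u j)) i := by
      intro i
      rw [hwdef, hπmulVec, hWtπ, ← hreprW]
    have hdiv : ∀ i, ∃ t : S 2, w i = cho i * t := by
      intro i
      rcases hsi : eqv.symm i with a | b
      · refine ⟨w i, ?_⟩
        have hcho1 : cho i = 1 := by simp only [hcho]; rw [hsi]; rfl
        rw [hcho1, one_mul]
      · have h0 : πl α β (w i) = 0 := by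
          rw [hπw i, hbF, Module.Basis.repr_reindex_apply, hsi]
          exact reprVanish _ huV b
        obtain ⟨t, ht⟩ := lin_dvd_of_πl_eq_zero α β hαβ h0
        refine ⟨t, ?_⟩
        have hcho1 : cho i = lp := by simp only [hcho]; rw [hsi]; rfl
        rw [hcho1]
        exact ht
    choose tt htt using hdiv
    refine ⟨tt, ?_⟩
    have hcoord : bN.equivFun zN = bN.equivFun (∑ i, tt i • melt i) := by
      rw [map_sum]
      have he : ∀ i, bN.equivFun (tt i • melt i) = tt i • mvec i := by
        intro i
        rw [map_smul, hmeltcoord]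
      rw [Finset.sum_congr rfl (fun i _ => he i), ← hu, hu_eq]
      funext r
      rw [Finset.sum_apply]
      simp only [Matrix.mulVec, dotProduct, hmvec, Pi.smul_apply, smul_eq_mul]
      apply Finset.sum_congr rfl
      intro i _
      rw [htt i]
      ring
    have hzeq : zN = ∑ i, tt i • melt i := by
      have := congrArg bN.equivFun.symm hcoord
      rwa [LinearEquiv.symm_apply_apply, LinearEquiv.symm_apply_apply] at this
    apply Subtype.ext
    calc (↑z : ι → S 2) = ↑zN := rfl
      _ = ↑(∑ i, tt i • melt i) := by rw [hzeq]
      _ = ∑ i, tt i • (↑(melt i) : ι → S 2) := by push_cast; rfl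
      _ = (↑(∑ i, tt i • BB i) : ι → S 2) := by push_cast; rfl
  -- independence
  have hchone : ∀ i, cho i ≠ 0 := by
    intro i
    rcases hsi : eqv.symm i with a | b
    · have hcho1 : cho i = 1 := by simp only [hcho]; rw [hsi]; rfl
      rw [hcho1]; exact one_ne_zero
    · have hcho1 : cho i = lp := by simp only [hcho]; rw [hsi]; rfl
      rw [hcho1]; exact hlne
  have hindep : LinearIndependent (S 2) BB := by
    rw [Fintype.linearIndependent_iff]
    intro c hc i
    have h0 : (∑ j, c j • melt j) = (0 : ↥N) := by
      apply Subtype.ext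
      have h1 := congrArg (Subtype.val) hc
      push_cast at h1 ⊢
      convert h1 using 2
    have h1 : ∑ j, c j • mvec j = (0 : Fin n → S 2) := by
      have := congrArg bN.equivFun h0
      rw [map_sum, map_zero] at this
      have he : ∀ j, bN.equivFun (c j • melt j) = c j • mvec j := by
        intro j
        rw [map_smul, hmeltcoord]
      rwa [Finset.sum_congr rfl (fun j _ => he j)] at this
    have h2 : Ut.mulVec (fun j => c j * cho j) = 0 := by
      rw [← h1]
      funext r
      rw [Finset.sum_apply]
      simp only [Matrix.mulVec, dotProduct, hmvec, Pi.smul_apply, smul_eq_mul]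
      apply Finset.sum_congr rfl
      intro j _
      ring
    have h3 : (fun j => c j * cho j) = (0 : Fin n → S 2) := by
      have := congrArg (Wt.mulVec) h2
      rwa [Matrix.mulVec_mulVec, hWtUt, Matrix.one_mulVec, Matrix.mulVec_zero] at this
    have h4 : c i * cho i = 0 := congrFun h3 i
    rcases mul_eq_zero.mp h4 with h | h
    · exact h
    · exact absurd h (hchone i)
  refine ⟨Module.Basis.mk hindep ?_⟩
  intro z _
  obtain ⟨c, hcz⟩ := hspan z
  rw [hcz]
  apply Submodule.sum_mem
  intro i _
  apply Submodule.smul_mem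
  exact Submodule.subset_span ⟨i, rfl⟩







end LineStuff

lemma mem_degIdx (m : ℕ) (d : Fin 2 → ℕ) :
    d ∈ degIdx 2 m ↔ (d 0 + d 1 = m) := by
  rw [degIdx, Finset.mem_filter, Fintype.mem_piFinset]
  rw [Fin.sum_univ_two]
  constructor
  · rintro ⟨_, h2⟩
    exact h2
  · intro h
    refine ⟨?_, h⟩
    intro i
    rw [Finset.mem_range]
    fin_cases i
    · show d 0 < m + 1
      omega
    · show d 1 < m + 1
      omega

def degIdxEquiv (m : ℕ) : Fin (m + 1) ≃ ↥(degIdx 2 m) := by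
  refine Equiv.ofBijective (fun a => ⟨fun j => if j = 0 then (a : ℕ) else m - a, ?_⟩) ⟨?_, ?_⟩
  · rw [mem_degIdx]
    simp only [show ((0:Fin 2) = 0) = True by simp, show ((1:Fin 2) = 0) = False by simp,
      if_true, if_false]
    have := a.2
    omega
  · intro a b hab
    have h := congrFun (congrArg (Subtype.val) hab) 0
    simp only [if_pos rfl] at h
    exact Fin.ext h
  · rintro ⟨d, hd⟩
    rw [mem_degIdx] at hd
    refine ⟨⟨d 0, by omega⟩, ?_⟩
    apply Subtype.ext
    funext j
    fin_cases j
    · simp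
    · simp only [show ((1:Fin 2) = 0) = False by simp, if_false]
      show m - d 0 = d 1
      omega

def topBasis (m : ℕ) :
    Module.Basis (Fin (m + 1)) (S 2) ↥(⊤ : Submodule (S 2) (↥(degIdx 2 m) → S 2)) :=
  ((Pi.basisFun (S 2) ↥(degIdx 2 m)).reindex (degIdxEquiv m).symm).map
    (Submodule.topEquiv).symm

end AuxProof

noncomputable section

open MvPolynomial LineStuff

/-- For any central arrangement in `ℂ²` with `r ≥ 1` forms and
any `m ≥ 1`, the module `D^(m)(𝒜)` is a free `S`-module of rank `m+1`. -/
theorem Dm_two_variables_free {r m : ℕ} (hr : 1 ≤ r) (hm : 1 ≤ m)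
    (p : Fin r → S 2) (hlin : ∀ i, IsLinearForm (p i))
    (hnp : PairwiseNonProportional p) :
    Module.Free (S 2) (Dm m (∏ j, p j)) ∧
    Nonempty (Module.Basis (Fin (m + 1)) (S 2) (Dm m (∏ j, p j))) := by
  classical
  set A : Fin r → ℂ := fun j => coeff (Finsupp.single 0 1) (p j) with hA
  set B : Fin r → ℂ := fun j => coeff (Finsupp.single 1 1) (p j) with hB
  have hplin : ∀ j, p j = lin (A j) (B j) := fun j => eq_lin_of_linear_form (hlin j).2
  have hne : ∀ j, ¬(A j = 0 ∧ B j = 0) := by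
    intro j hc
    apply (hlin j).1
    rw [hplin j, hc.1, hc.2, lin]
    simp
  have hcross : ∀ i j, i ≠ j → A i * B j - B i * A j ≠ 0 := by
    intro i j hij hc
    have h1 : A i * B j = B i * A j := by linear_combination hc
    by_cases hBj : B j = 0
    · have hAj : A j ≠ 0 := fun h => hne j ⟨h, hBj⟩
      have hBi : B i = 0 := by
        have h2 : B i * A j = 0 := by rw [← h1, hBj, mul_zero]
        rcases mul_eq_zero.mp h2 with h | h
        · exact h
        · exact absurd h hAj
      apply hnp i j hij (A i / A j)
      rw [hplin i, hplin j, MvPolynomial.smul_eq_C_mul, ← lin_smul]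
      congr 1
      · field_simp
      · rw [hBi, hBj, mul_zero]
    · apply hnp i j hij (B i / B j)
      rw [hplin i, hplin j, MvPolynomial.smul_eq_C_mul, ← lin_smul]
      congr 1
      · field_simp
        linear_combination h1
      · field_simp
  set P := ∏ j, p j with hP
  have hPlin : P = ∏ j, lin (A j) (B j) := Finset.prod_congr rfl (fun j _ => hplin j)
  have hdvd_iff : ∀ f, f ∈ Ideal.span {P} ↔ ∀ j, πl (A j) (B j) f = 0 := by
    intro f
    rw [Ideal.mem_span_singleton, hPlin]
    exact prod_dvd_iff A B hne hcross f
  set Dj : Fin r → Submodule (S 2) ((degIdx 2 m) → S 2) := fun j =>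
    { carrier := {c | ∀ g : S 2, πl (A j) (B j) (applyOp c (P * g)) = 0}
      add_mem' := by
        intro a b ha hb g
        rw [applyOp_add, map_add, ha g, hb g, add_zero]
      zero_mem' := by
        intro g
        rw [applyOp_zero, map_zero]
      smul_mem' := by
        intro s c hc g
        rw [applyOp_smul, map_mul, hc g, mul_zero] } with hDj
  have hmemDj : ∀ (j) (c : (degIdx 2 m) → S 2),
      c ∈ Dj j ↔ ∀ g : S 2, πl (A j) (B j) (applyOp c (P * g)) = 0 :=
    fun j c => Iff.rfl
  have hDm : Dm m P = ⨅ j, Dj j := by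
    apply le_antisymm
    · intro c hc
      rw [Submodule.mem_iInf]
      intro j
      rw [hmemDj]
      intro g
      have h1 : P * g ∈ Ideal.span {P} := Ideal.mem_span_singleton.mpr (dvd_mul_right P g)
      have h2 := hc (P * g) h1
      exact (hdvd_iff _).mp h2 j
    · intro c hc f hf
      obtain ⟨g, rfl⟩ := Ideal.mem_span_singleton.mp hf
      rw [hdvd_iff]
      intro j
      rw [Submodule.mem_iInf] at hc
      exact (hmemDj j c).mp (hc j) g
  have key : ∀ T : Finset (Fin r),
      Nonempty (Module.Basis (Fin (m + 1)) (S 2) ↥(⨅ j ∈ T, Dj j)) := by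
    intro T
    induction T using Finset.induction_on with
    | empty =>
      have h : (⨅ j ∈ (∅ : Finset (Fin r)), Dj j) = ⊤ := by simp
      rw [h]
      exact ⟨topBasis m⟩
    | @insert j T hj ih =>
      obtain ⟨bT⟩ := ih
      have h : (⨅ i ∈ insert j T, Dj i) = (⨅ i ∈ T, Dj i) ⊓ Dj j := by
        rw [Finset.iInf_insert, inf_comm]
      rw [h]
      exact step (A j) (B j) (hne j) (⨅ i ∈ T, Dj i) bT
        (fun (g : S 2) (c : (degIdx 2 m) → S 2) => πl (A j) (B j) (applyOp c (P * g)))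
        (by
          intro g s a
          rw [applyOp_smul, map_mul])
        (by
          intro g a b
          rw [applyOp_add, map_add])
        (Dj j) (fun v => Iff.rfl)
  obtain ⟨b⟩ := key Finset.univ
  have heq : (⨅ j ∈ Finset.univ, Dj j) = Dm m P := by
    rw [hDm]
    apply le_antisymm
    · intro c hc
      rw [Submodule.mem_iInf]
      intro j
      rw [Submodule.mem_iInf] at hc
      have := hc j
      rw [Submodule.mem_iInf] at this
      exact this (Finset.mem_univ j)
    · intro c hc
      rw [Submodule.mem_iInf]
      intro j
      rw [Submodule.mem_iInf]
      intro _
      rw [Submodule.mem_iInf] at hc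
      exact hc j
  set b' := b.map (LinearEquiv.ofEq _ _ heq) with hb'
  exact ⟨Module.Free.of_basis b', ⟨b'⟩⟩

end
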